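/- Let φ: ℝⁿ → (0, +∞] be a proper convex function and ψ = φ*. Then I⁺(epigraph(φ)) = epigraph(ψ)° ∩ H⁻, where I⁺(x,t) = (x/t, −1/t), H⁻ = {(y,s) : s < 0}, and ° denotes the polar body in ℝ^{n+1}. Moreover, if ψ(0) < ∞ then epigraph(ψ)° \ H⁻ = {(x, 0) : x ∈ dom(ψ)°}. -/

import Mathlib

open MeasureTheory Filter
open scoped ENNReal RealInnerProductSpace

noncomputable section

abbrev En (n : ℕ) := EuclideanSpace ℝ (Fin n)

/-- Legendre transform of an `EReal`-valued function: `ψ*(y) = sup_{x ∈ dom ψ} (⟨x,y⟩ - ψ x)`. -/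
def legendre {n : ℕ} (ψ : En n → EReal) (y : En n) : EReal :=
  ⨆ x : {x : En n // ψ x < ⊤}, ((⟪x.1, y⟫ : ℝ) : EReal) - ψ x.1

/-- Convexity for `ℝ ∪ {+∞}`-valued functions. -/
def EConvexOn {n : ℕ} (ψ : En n → EReal) : Prop :=
  ∀ x y : En n, ∀ a b : ℝ, 0 ≤ a → 0 ≤ b → a + b = 1 →
    ψ (a • x + b • y) ≤ (a : EReal) * ψ x + (b : EReal) * ψ y

/-- `t ^ (-s)` with the conventions `0^(-s) = ∞`, `∞^(-s) = 0` (for `s > 0`). -/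
def negPow (t : EReal) (s : ℝ) : ℝ≥0∞ :=
  if t = ⊤ then 0 else if t ≤ 0 then ⊤ else ENNReal.ofReal (t.toReal ^ (-s))

/-- `I_p(ψ) = (∫ (ψ*)^{-(n+p)})^{-1/p} ∈ [0,∞]`. -/
def Ip (n : ℕ) (p : ℝ) (ψ : En n → EReal) : ℝ≥0∞ :=
  (∫⁻ x, negPow (legendre ψ x) ((n : ℝ) + p)) ^ (-(1 : ℝ) / p)

/-- The open upper half-space `H⁺ ⊆ ℝⁿ × ℝ`. -/
def Hplus (n : ℕ) : Set (En n × ℝ) := {p | 0 < p.2}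

/-- The open lower half-space `H⁻ ⊆ ℝⁿ × ℝ`. -/
def Hminus (n : ℕ) : Set (En n × ℝ) := {p | p.2 < 0}

/-- The fractional-linear map `I⁺(x,t) = (x/t, -1/t)`. -/
def Iplus (n : ℕ) : En n × ℝ → En n × ℝ := fun p => ((p.2)⁻¹ • p.1, -(p.2)⁻¹)

/-- The fractional-linear map `I⁻(y,s) = (-y/s, -1/s)`. -/
def Iminus (n : ℕ) : En n × ℝ → En n × ℝ := fun p => (-(p.2)⁻¹ • p.1, -(p.2)⁻¹)

/-- `V` is a relative half-space of `H`: `V = {p ∈ H | ⟨p₁,θ⟩ + b p₂ + c ≥ 0}`. -/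
def IsRelHalfSpace {n : ℕ} (H V : Set (En n × ℝ)) : Prop :=
  ∃ θ : En n, ∃ b c : ℝ, V = {p ∈ H | 0 ≤ ⟪p.1, θ⟫ + b * p.2 + c}

/-- The epigraph of an `ℝ ∪ {+∞}`-valued function, as a subset of `ℝⁿ × ℝ`. -/
def epiE {n : ℕ} (F : En n → EReal) : Set (En n × ℝ) := {p | F p.1 ≤ (p.2 : EReal)}

/-- The polar body of a subset of `ℝⁿ × ℝ = ℝ^{n+1}`. -/
def polarP {n : ℕ} (S : Set (En n × ℝ)) : Set (En n × ℝ) :=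
  {q | ∀ p ∈ S, ⟪q.1, p.1⟫ + q.2 * p.2 ≤ 1}

/-- The polar body of a subset of `ℝⁿ`. -/
def polarE {n : ℕ} (S : Set (En n)) : Set (En n) := {y | ∀ x ∈ S, ⟪y, x⟫ ≤ 1}

section Statement18Aux
open Topology
variable {n : ℕ}

lemma epi_closed {φ : En n → EReal} (h : LowerSemicontinuous φ) : IsClosed (epiE φ) := by
  rw [← isOpen_compl_iff, isOpen_iff_mem_nhds]
  rintro ⟨x, s⟩ hp
  simp only [Set.mem_compl_iff, epiE, Set.mem_setOf_eq, not_le] at hp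
  obtain ⟨r, hr1, hr2⟩ := exists_between hp
  have hrt : r ≠ ⊤ := (hr2.trans_le le_top).ne
  have hrb : r ≠ ⊥ := (lt_of_le_of_lt bot_le hr1).ne'
  have h1 : ∀ᶠ x' in 𝓝 x, r < φ x' := h x r hr2
  have hsr : s < r.toReal := by
    rw [← EReal.coe_lt_coe_iff, EReal.coe_toReal hrt hrb]; exact hr1
  have h2 : ∀ᶠ s' in 𝓝 s, s' < r.toReal := eventually_lt_nhds hsr
  rw [nhds_prod_eq]
  filter_upwards [h1.prod_mk h2] with q hq
  simp only [Set.mem_compl_iff, epiE, Set.mem_setOf_eq, not_le]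
  calc (q.2 : EReal) < (r.toReal : EReal) := EReal.coe_lt_coe_iff.2 hq.2
    _ = r := EReal.coe_toReal hrt hrb
    _ < φ q.1 := hq.1


lemma epi_convex {φ : En n → EReal} (h : EConvexOn φ) : Convex ℝ (epiE φ) := by
  rintro ⟨x, s⟩ hx ⟨y, t⟩ hy a b ha hb hab
  simp only [epiE, Set.mem_setOf_eq] at *
  calc φ (a • x + b • y) ≤ (a : EReal) * φ x + (b : EReal) * φ y := h x y a b ha hb hab
    _ ≤ (a : EReal) * (s : EReal) + (b : EReal) * (t : EReal) := by
        gcongr <;> exact_mod_cast ‹_›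
    _ = ((a * s + b * t : ℝ) : EReal) := by norm_cast


-- term ≤ legendre
lemma le_of_legendre_le {φ : En n → EReal} (hpos : ∀ x, 0 < φ x) {y : En n} {c : ℝ}
    (h : legendre φ y ≤ (c : EReal)) :
    ∀ x : En n, φ x ≠ ⊤ → ⟪x, y⟫ - (φ x).toReal ≤ c := by
  intro x hx
  have hb : φ x ≠ ⊥ := (EReal.bot_lt_zero.trans (hpos x)).ne'
  have hterm : ((⟪x, y⟫ : ℝ) : EReal) - φ x ≤ legendre φ y :=
    le_iSup (fun z : {x : En n // φ x < ⊤} => ((⟪z.1, y⟫ : ℝ) : EReal) - φ z.1)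
      ⟨x, lt_top_iff_ne_top.2 hx⟩
  rw [← EReal.coe_toReal hx hb, ← EReal.coe_sub] at hterm
  exact_mod_cast hterm.trans h

lemma legendre_le {φ : En n → EReal} (hpos : ∀ x, 0 < φ x) {y : En n} {c : ℝ}
    (h : ∀ x : En n, φ x ≠ ⊤ → ⟪x, y⟫ - (φ x).toReal ≤ c) :
    legendre φ y ≤ (c : EReal) := by
  apply iSup_le
  rintro ⟨x, hx⟩
  have hx' : φ x ≠ ⊤ := hx.ne
  have hb : φ x ≠ ⊥ := (EReal.bot_lt_zero.trans (hpos x)).ne'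
  rw [← EReal.coe_toReal hx' hb, ← EReal.coe_sub]
  exact_mod_cast h x hx'

/-- Separation: a point strictly below/outside the epigraph can be separated. -/
lemma sep {φ : En n → EReal} (hpos : ∀ x, 0 < φ x) (hconv : EConvexOn φ)
    (hlsc : LowerSemicontinuous φ) (hne : ∃ x, φ x ≠ ⊤)
    {x₀ : En n} {t : ℝ} (h : ¬ φ x₀ ≤ (t : EReal)) :
    ∃ (y : En n) (b u : ℝ), 0 ≤ b ∧ ⟪x₀, y⟫ + b * t < u ∧
      ∀ (x : En n) (s : ℝ), φ x ≤ (s : EReal) → u < ⟪x, y⟫ + b * s := by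
  have hnot : ((x₀, t) : En n × ℝ) ∉ epiE φ := h
  obtain ⟨f, u, hfu, hfs⟩ :=
    geometric_hahn_banach_point_closed (epi_convex hconv) (epi_closed hlsc) hnot
  set b : ℝ := f (0, 1) with hb
  set g : En n →L[ℝ] ℝ := f.comp (ContinuousLinearMap.inl ℝ (En n) ℝ) with hg
  have hdecomp : ∀ (x : En n) (s : ℝ), f (x, s) = g x + b * s := by
    intro x s
    have : ((x, s) : En n × ℝ) = (x, 0) + s • ((0 : En n), (1 : ℝ)) := by
      simp [Prod.ext_iff]
    rw [this, map_add, _root_.map_smul]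
    simp [hg, hb, mul_comm, ContinuousLinearMap.inl_apply]
  set y : En n := (InnerProductSpace.toDual ℝ (En n)).symm g with hy
  have hyg : ∀ x : En n, ⟪x, y⟫ = g x := by
    intro x
    rw [real_inner_comm]
    exact InnerProductSpace.toDual_symm_apply
  -- membership of (x, s) in epi
  have hmem : ∀ (x : En n) (s : ℝ), φ x ≤ (s : EReal) → u < ⟪x, y⟫ + b * s := by
    intro x s hs
    have := hfs (x, s) hs
    rwa [hdecomp, ← hyg] at this
  -- b ≥ 0
  obtain ⟨x₁, hx₁⟩ := hne
  have hb1 : φ x₁ ≠ ⊥ := (EReal.bot_lt_zero.trans (hpos x₁)).ne'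
  set T : ℝ := (φ x₁).toReal with hT
  have hmemT : ∀ s : ℝ, T ≤ s → u < ⟪x₁, y⟫ + b * s := by
    intro s hs
    exact hmem x₁ s (by rw [← EReal.coe_toReal hx₁ hb1]; exact_mod_cast hs)
  have hbnn : 0 ≤ b := by
    by_contra hbneg
    push_neg at hbneg
    have h1 : u < ⟪x₁, y⟫ + b * T := hmemT T le_rfl
    set K : ℝ := (u - ⟪x₁, y⟫ - b * T) / b with hK
    have hK0 : 0 ≤ K := div_nonneg_of_nonpos (by linarith) hbneg.le
    have h2 : u < ⟪x₁, y⟫ + b * (T + K) := hmemT (T + K) (by linarith)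
    have h3 : b * K = u - ⟪x₁, y⟫ - b * T := by
      rw [hK, mul_div_cancel₀ _ hbneg.ne]
    nlinarith [h2, h3]
  refine ⟨y, b, u, hbnn, ?_, hmem⟩
  have := hfu
  rwa [hdecomp, ← hyg] at this

lemma div_trick {A P b u : ℝ} (hb : 0 < b) (h : u ≤ A + b * P) : -b⁻¹ * A - P ≤ -(u / b) := by
  have h2 : u / b ≤ b⁻¹ * A + P := by
    rw [div_le_iff₀ hb]
    have he : (b⁻¹ * A + P) * b = A + b * P := by field_simp
    rw [he]; exact h
  linarith

lemma div_trick2 {A t b u : ℝ} (hb : 0 < b) (h : A + b * t < u) :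
    t < -b⁻¹ * A - -(u / b) := by
  have h1 : t < (u - A) / b := by rw [lt_div_iff₀ hb]; linarith
  have he : -b⁻¹ * A - -(u / b) = (u - A) / b := by field_simp; ring
  rw [he]; exact h1

/-- The Legendre transform is proper. -/
lemma psi_proper {φ : En n → EReal} (hpos : ∀ x, 0 < φ x) (hconv : EConvexOn φ)
    (hlsc : LowerSemicontinuous φ) (hne : ∃ x, φ x ≠ ⊤) :
    ∃ (y₁ : En n) (c₁ : ℝ), legendre φ y₁ ≤ (c₁ : EReal) := by
  obtain ⟨x₁, hx₁⟩ := hne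
  have hb1 : φ x₁ ≠ ⊥ := (EReal.bot_lt_zero.trans (hpos x₁)).ne'
  set T : ℝ := (φ x₁).toReal with hT
  have hTx : φ x₁ = (T : EReal) := (EReal.coe_toReal hx₁ hb1).symm
  have hnotle : ¬ φ x₁ ≤ ((T - 1 : ℝ) : EReal) := by
    rw [hTx]; exact_mod_cast not_le.2 (by linarith : T - 1 < T)
  obtain ⟨y, b, u, hbnn, hlt, hmem⟩ := sep hpos hconv hlsc ⟨x₁, hx₁⟩ hnotle
  have h1 : u < ⟪x₁, y⟫ + b * T := hmem x₁ T (le_of_eq hTx)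
  have hbpos : 0 < b := by
    rcases hbnn.lt_or_eq with h | h
    · exact h
    · exfalso; rw [← h] at hlt h1; simp at hlt h1; linarith
  refine ⟨(-b⁻¹) • y, -(u / b), ?_⟩
  apply legendre_le hpos
  intro x hx
  have hbx : φ x ≠ ⊥ := (EReal.bot_lt_zero.trans (hpos x)).ne'
  have := hmem x (φ x).toReal (le_of_eq (EReal.coe_toReal hx hbx).symm)
  have hinner : ⟪x, (-b⁻¹) • y⟫ = -b⁻¹ * ⟪x, y⟫ := real_inner_smul_right _ _ _
  rw [hinner]
  exact div_trick hbpos this.le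

/-- Key separation consequence: biconjugate ≥ φ. -/
lemma key {φ : En n → EReal} (hpos : ∀ x, 0 < φ x) (hconv : EConvexOn φ)
    (hlsc : LowerSemicontinuous φ) (hne : ∃ x, φ x ≠ ⊤)
    {x₀ : En n} {t : ℝ} (h : ¬ φ x₀ ≤ (t : EReal)) :
    ∃ (y : En n) (c : ℝ), legendre φ y ≤ (c : EReal) ∧ t < ⟪x₀, y⟫ - c := by
  obtain ⟨y, b, u, hbnn, hlt, hmem⟩ := sep hpos hconv hlsc hne h
  rcases hbnn.lt_or_eq with hbpos | hb0
  · -- b > 0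
    refine ⟨(-b⁻¹) • y, -(u / b), ?_, ?_⟩
    · apply legendre_le hpos
      intro x hx
      have hbx : φ x ≠ ⊥ := (EReal.bot_lt_zero.trans (hpos x)).ne'
      have := hmem x (φ x).toReal (le_of_eq (EReal.coe_toReal hx hbx).symm)
      rw [real_inner_smul_right]
      exact div_trick hbpos this.le
    · rw [real_inner_smul_right]
      exact div_trick2 hbpos hlt
  · -- b = 0
    obtain ⟨y₁, c₁, hy₁⟩ := psi_proper hpos hconv hlsc hne
    subst hb0
    simp only [zero_mul, add_zero] at hlt hmem
    set δ : ℝ := u - ⟪x₀, y⟫ with hδ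
    have hδpos : 0 < δ := by simp only [hδ]; linarith
    set lam : ℝ := max 1 ((t - ⟪x₀, y₁⟫ + c₁) / δ + 1) with hlam
    have hlam1 : 0 < lam := lt_of_lt_of_le one_pos (le_max_left _ _)
    have hlam2 : t - ⟪x₀, y₁⟫ + c₁ < lam * δ := by
      have : (t - ⟪x₀, y₁⟫ + c₁) / δ + 1 ≤ lam := le_max_right _ _
      rw [div_add' _ _ _ hδpos.ne'] at this
      rw [div_le_iff₀ hδpos] at this
      nlinarith
    refine ⟨y₁ - lam • y, c₁ - lam * u, ?_, ?_⟩
    · apply legendre_le hpos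
      intro x hx
      have hbx : φ x ≠ ⊥ := (EReal.bot_lt_zero.trans (hpos x)).ne'
      have h1 : ⟪x, y₁⟫ - (φ x).toReal ≤ c₁ := le_of_legendre_le hpos hy₁ x hx
      have h2 : u < ⟪x, y⟫ := hmem x (φ x).toReal (le_of_eq (EReal.coe_toReal hx hbx).symm)
      rw [inner_sub_right, real_inner_smul_right]
      nlinarith
    · rw [inner_sub_right, real_inner_smul_right]
      simp only [hδ] at hlam2
      nlinarith

end Statement18Aux

theorem statement18 {n : ℕ} (φ : En n → EReal) (hpos : ∀ x, 0 < φ x)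
    (hconv : EConvexOn φ) (hlsc : LowerSemicontinuous φ) (hne : ∃ x, φ x ≠ ⊤) :
    Iplus n '' epiE φ = polarP (epiE (legendre φ)) ∩ Hminus n ∧
    (legendre φ 0 < ⊤ →
      polarP (epiE (legendre φ)) \ Hminus n
        = {p : En n × ℝ | p.2 = 0 ∧ p.1 ∈ polarE {x | legendre φ x < ⊤}}) := by
  constructor
  · ext ⟨y', s'⟩
    constructor
    · rintro ⟨⟨x, t⟩, hxt, heq⟩
      have hxt' : φ x ≤ (t : EReal) := hxt
      have htpos : 0 < t := by
        have h0 : ((0 : ℝ) : EReal) < (t : EReal) := by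
          exact_mod_cast (hpos x).trans_le hxt'
        exact_mod_cast h0
      have hxtop : φ x ≠ ⊤ := (hxt'.trans_lt (EReal.coe_lt_top t)).ne
      have hxbot : φ x ≠ ⊥ := (EReal.bot_lt_zero.trans (hpos x)).ne'
      have hTle : (φ x).toReal ≤ t := by
        rw [← EReal.coe_le_coe_iff, EReal.coe_toReal hxtop hxbot]; exact hxt'
      obtain ⟨h1, h2⟩ : t⁻¹ • x = y' ∧ -t⁻¹ = s' := by
        simpa [Iplus, Prod.ext_iff] using heq
      constructor
      · rintro ⟨y, s⟩ hys
        have hx' : ⟪x, y⟫ - (φ x).toReal ≤ s := le_of_legendre_le hpos hys x hxtop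
        rw [← h1, ← h2]
        have hinner : ⟪t⁻¹ • x, y⟫ = t⁻¹ * ⟪x, y⟫ := real_inner_smul_left _ _ _
        rw [hinner]
        have key1 : ⟪x, y⟫ - s ≤ t := by linarith
        have : t⁻¹ * (⟪x, y⟫ - s) ≤ t⁻¹ * t :=
          mul_le_mul_of_nonneg_left key1 (inv_nonneg.2 htpos.le)
        rw [inv_mul_cancel₀ htpos.ne'] at this
        nlinarith
      · show s' < 0
        rw [← h2]
        simp [htpos, inv_pos.2 htpos]
    · rintro ⟨hq, hs⟩
      have hs' : s' < 0 := hs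
      set t : ℝ := -s'⁻¹ with ht
      have htpos : 0 < t := by
        rw [ht]; simp [inv_neg''.2 hs']
      refine ⟨(t • y', t), ?_, ?_⟩
      · show φ (t • y') ≤ (t : EReal)
        by_contra hcon
        obtain ⟨y, c, hyc, hgt⟩ := key hpos hconv hlsc hne hcon
        have := hq (y, c) hyc
        simp only at this
        have hinner : ⟪t • y', y⟫ = t * ⟪y', y⟫ := real_inner_smul_left _ _ _
        rw [hinner] at hgt
        have hts : t * s' = -1 := by
          rw [ht, neg_mul, inv_mul_cancel₀ hs'.ne]
        have hexp : t * (⟪y', y⟫ + s' * c) = t * ⟪y', y⟫ - c := by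
          rw [mul_add, ← mul_assoc, mul_comm t s', mul_comm s' t, hts]; ring
        have hmul := mul_le_mul_of_nonneg_left this htpos.le
        rw [mul_one, hexp] at hmul
        linarith
      · show ((t : ℝ)⁻¹ • (t • y'), -(t : ℝ)⁻¹) = (y', s')
        have htne : t ≠ 0 := htpos.ne'
        have h2 : -t⁻¹ = s' := by rw [ht]; field_simp
        rw [smul_smul, inv_mul_cancel₀ htne, one_smul, h2]
  · intro h0
    ext ⟨y', s'⟩
    constructor
    · rintro ⟨hq, hns⟩
      have hns' : ¬ s' < 0 := hns
      push_neg at hns'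
      -- first, s' = 0
      obtain ⟨c₀, hc₀⟩ : ∃ c₀ : ℝ, legendre φ 0 ≤ (c₀ : EReal) :=
        ⟨(legendre φ 0).toReal, EReal.le_coe_toReal h0.ne⟩
      have hs0 : s' = 0 := by
        by_contra hne0
        have hspos : 0 < s' := lt_of_le_of_ne hns' (Ne.symm hne0)
        set s : ℝ := max c₀ (2 / s') with hsdef
        have hmem : ((0 : En n), s) ∈ epiE (legendre φ) := by
          show legendre φ 0 ≤ (s : EReal)
          exact hc₀.trans (by exact_mod_cast le_max_left _ _)
        have := hq ((0 : En n), s) hmem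
        simp only [inner_zero_right, zero_add] at this
        have h2s : 2 / s' ≤ s := le_max_right _ _
        have : 2 ≤ s' * s := by
          rw [div_le_iff₀ hspos] at h2s; linarith [mul_comm s s']
        linarith [hq ((0 : En n), s) hmem, this]
      refine ⟨hs0, ?_⟩
      intro x hx
      have hx' : legendre φ x < ⊤ := hx
      have hmem : (x, (legendre φ x).toReal) ∈ epiE (legendre φ) :=
        EReal.le_coe_toReal hx'.ne
      have := hq (x, (legendre φ x).toReal) hmem
      rw [hs0] at this
      simpa using this
    · rintro ⟨hs0, hpolar⟩
      constructor
      · rintro ⟨y, s⟩ hys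
        have hys' : legendre φ y ≤ (s : EReal) := hys
        have hdom : legendre φ y < ⊤ := hys'.trans_lt (EReal.coe_lt_top s)
        have := hpolar y hdom
        rw [hs0]
        simpa using this
      · show ¬ s' < 0
        have hs0' : s' = 0 := hs0
        rw [hs0']; exact lt_irrefl 0
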